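/- arXiv:2211.05574 — 2 statements merged into one kernel-verified Lean document; each statement's English description precedes it below -/
import Mathlib

section
/- Let G = (V,E) be a finite simple graph with a 1-critical bifiltration given by crit : E → ℝ², and let e = {a,b} be an edge of G. Define C := {crit(e)} ∪ { crit_e(w₁) ∗ crit_e(w₂) : w₁, w₂ ∈ N_G(e) } (where w₁ = w₂ is allowed). Then e is dominated in G_c for every grade c ∈ C if and only if e is filtration-dominated in G. -/
/-- The subgraph of `G` at grade `c` in a 1-critical bifiltration: it keeps
exactly the edges whose critical grade is `≤ c` (componentwise order on `ℝ²`). -/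
def gradedSubgraph {V : Type*} (G : SimpleGraph V) (crit : Sym2 V → ℝ × ℝ)
    (c : ℝ × ℝ) : SimpleGraph V where
  Adj u v := G.Adj u v ∧ crit s(u, v) ≤ c
  symm := by
    constructor
    intro u v h
    refine ⟨h.1.symm, ?_⟩
    rw [Sym2.eq_swap]
    exact h.2
  loopless := ⟨fun u h => G.irrefl h.1⟩

/-- `w` is an edge neighbor of the edge `{a,b}` in `H`: it is adjacent to both endpoints. -/
def edgeNbr {V : Type*} (H : SimpleGraph V) (a b w : V) : Prop :=
  H.Adj a w ∧ H.Adj b w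

/-- The edge `{a,b}` is dominated by `v` in `H`. -/
def dominatedBy {V : Type*} (H : SimpleGraph V) (a b v : V) : Prop :=
  edgeNbr H a b v ∧ ∀ w, edgeNbr H a b w → w ≠ v → H.Adj v w

/-- The edge `{a,b}` is dominated in `H` (by some vertex). -/
def dominated {V : Type*} (H : SimpleGraph V) (a b : V) : Prop :=
  ∃ v, dominatedBy H a b v

/-- `crit_e(w) = crit(e) ∗ crit({a,w}) ∗ crit({b,w})`, the grade at which `w`
becomes an edge neighbor of `e = {a,b}`. -/
def critE {V : Type*} (crit : Sym2 V → ℝ × ℝ) (a b w : V) : ℝ × ℝ :=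
  crit s(a, b) ⊔ crit s(a, w) ⊔ crit s(b, w)

/-- The set `C = {crit(e)} ∪ {crit_e(w₁) ∗ crit_e(w₂) : w₁, w₂ ∈ N_G(e)}`. -/
def critJoins {V : Type*} (G : SimpleGraph V) (crit : Sym2 V → ℝ × ℝ)
    (a b : V) : Set (ℝ × ℝ) :=
  {crit s(a, b)} ∪
    {x | ∃ w₁ w₂, edgeNbr G a b w₁ ∧ edgeNbr G a b w₂ ∧
      x = critE crit a b w₁ ⊔ critE crit a b w₂}

/-- `Δ(p,q) = {r : p ≤ r ∧ ¬ q ≤ r}`. -/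
def Delta (p q : ℝ × ℝ) : Set (ℝ × ℝ) := {r | p ≤ r ∧ ¬ q ≤ r}

/-- Lemma: joins of critical grades suffice.
`e = {a,b}` is dominated at every grade in `C` iff it is filtration-dominated. -/
theorem dominated_on_critJoins_iff_filtrationDominated
    {V : Type*} [Fintype V] (G : SimpleGraph V) (crit : Sym2 V → ℝ × ℝ)
    (a b : V) (hab : G.Adj a b) :
    (∀ c ∈ critJoins G crit a b, dominated (gradedSubgraph G crit c) a b) ↔
      (∀ c : ℝ × ℝ, crit s(a, b) ≤ c → dominated (gradedSubgraph G crit c) a b) := by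
  classical
  constructor
  · intro h c hc
    set N : Finset V := Finset.univ.filter
      (fun w => edgeNbr (gradedSubgraph G crit c) a b w) with hN
    have hNmem : ∀ w, w ∈ N ↔ edgeNbr (gradedSubgraph G crit c) a b w := by
      intro w; simp [hN]
    have hcritle : ∀ w ∈ N, critE crit a b w ≤ c := by
      intro w hw
      rw [hNmem] at hw
      exact sup_le (sup_le hc hw.1.2) hw.2.2
    -- N is nonempty
    obtain ⟨v0, hv0, _⟩ := h (crit s(a, b)) (Or.inl rfl)
    have hv0N : v0 ∈ N := by
      rw [hNmem]
      exact ⟨⟨hv0.1.1, le_trans hv0.1.2 hc⟩, ⟨hv0.2.1, le_trans hv0.2.2 hc⟩⟩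
    have hNne : N.Nonempty := ⟨v0, hv0N⟩
    obtain ⟨w₁, hw₁N, hw₁⟩ := N.exists_max_image (fun w => (critE crit a b w).1) hNne
    obtain ⟨w₂, hw₂N, hw₂⟩ := N.exists_max_image (fun w => (critE crit a b w).2) hNne
    set c' : ℝ × ℝ := critE crit a b w₁ ⊔ critE crit a b w₂ with hc'
    have hc'le : c' ≤ c := sup_le (hcritle _ hw₁N) (hcritle _ hw₂N)
    have hlec' : ∀ w ∈ N, critE crit a b w ≤ c' := by
      intro w hw
      constructor
      · exact le_trans (hw₁ w hw) (le_trans (le_sup_left) le_rfl : (critE crit a b w₁).1 ≤ c'.1)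
      · exact le_trans (hw₂ w hw) (le_sup_right : (critE crit a b w₂).2 ≤ c'.2)
    have habc' : crit s(a, b) ≤ c' :=
      le_trans (le_sup_of_le_left le_sup_left) le_sup_left
    have hnbr' : ∀ w ∈ N, edgeNbr (gradedSubgraph G crit c') a b w := by
      intro w hw
      have hle := hlec' w hw
      have hwG := (hNmem w).1 hw
      exact ⟨⟨hwG.1.1, le_trans (le_sup_of_le_left le_sup_right) hle⟩,
        ⟨hwG.2.1, le_trans le_sup_right hle⟩⟩
    have hc'C : c' ∈ critJoins G crit a b := by
      right
      refine ⟨w₁, w₂, ?_, ?_, rfl⟩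
      · have := (hNmem w₁).1 hw₁N; exact ⟨this.1.1, this.2.1⟩
      · have := (hNmem w₂).1 hw₂N; exact ⟨this.1.1, this.2.1⟩
    obtain ⟨v, hvnbr, hvdom⟩ := h c' hc'C
    refine ⟨v, ⟨⟨hvnbr.1.1, le_trans hvnbr.1.2 hc'le⟩,
      ⟨hvnbr.2.1, le_trans hvnbr.2.2 hc'le⟩⟩, ?_⟩
    intro w hw hwv
    have hwN : w ∈ N := (hNmem w).2 hw
    have := hvdom w (hnbr' w hwN) hwv
    exact ⟨this.1, le_trans this.2 hc'le⟩
  · intro h c hc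
    rcases hc with hc | ⟨w₁, w₂, _, _, rfl⟩
    · exact h c (le_of_eq hc.symm)
    · exact h _ (le_trans (le_sup_of_le_left le_sup_left) le_sup_left)
end

section
/- Let G = (V,E) be a finite simple graph with a 1-critical bifiltration given by crit : E → ℝ², let e = {a,b} be an edge of G, and define C := {crit(e)} ∪ { crit_e(w₁) ∗ crit_e(w₂) : w₁, w₂ ∈ N_G(e) } (where w₁ = w₂ is allowed). Then for every grade q ∈ ℝ² with crit(e) ≤ q, there exists c ∈ C with c ≤ q such that N_{G_c}(e) = N_{G_q}(e). -/
/-- For every grade `q` above `crit(e)` there is a grade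
`c ∈ C` with `c ≤ q` whose edge-neighbor set of `e` agrees with that at `q`. -/
theorem exists_critJoin_same_edgeNbrs
    {V : Type*} [Fintype V] (G : SimpleGraph V) (crit : Sym2 V → ℝ × ℝ)
    (a b : V) (hab : G.Adj a b) (q : ℝ × ℝ) (hq : crit s(a, b) ≤ q) :
    ∃ c ∈ critJoins G crit a b, c ≤ q ∧
      {w | edgeNbr (gradedSubgraph G crit c) a b w} =
        {w | edgeNbr (gradedSubgraph G crit q) a b w} := by
  classical
  set S : Finset V :=
    Finset.univ.filter (fun w => edgeNbr (gradedSubgraph G crit q) a b w) with hS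
  have hmemS : ∀ w, w ∈ S ↔ edgeNbr (gradedSubgraph G crit q) a b w := by
    intro w; simp [hS]
  by_cases hne : S.Nonempty
  · obtain ⟨w₁, hw₁, hmax₁⟩ := S.exists_max_image (fun w => (critE crit a b w).1) hne
    obtain ⟨w₂, hw₂, hmax₂⟩ := S.exists_max_image (fun w => (critE crit a b w).2) hne
    have hSprop : ∀ w ∈ S, edgeNbr G a b w ∧ critE crit a b w ≤ q := by
      intro w hw
      obtain ⟨⟨ha1, ha2⟩, hb1, hb2⟩ := (hmemS w).1 hw
      exact ⟨⟨ha1, hb1⟩, sup_le (sup_le hq ha2) hb2⟩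
    set c : ℝ × ℝ := critE crit a b w₁ ⊔ critE crit a b w₂ with hc
    have hcq : c ≤ q := sup_le (hSprop w₁ hw₁).2 (hSprop w₂ hw₂).2
    have hkey : ∀ w ∈ S, critE crit a b w ≤ c := by
      intro w hw
      rw [Prod.le_def]
      constructor
      · exact (hmax₁ w hw).trans (by rw [hc, Prod.fst_sup]; exact le_sup_left)
      · exact (hmax₂ w hw).trans (by rw [hc, Prod.snd_sup]; exact le_sup_right)
    refine ⟨c, Or.inr ⟨w₁, w₂, (hSprop w₁ hw₁).1, (hSprop w₂ hw₂).1, rfl⟩, hcq, ?_⟩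
    ext w
    simp only [Set.mem_setOf_eq, edgeNbr, gradedSubgraph]
    constructor
    · rintro ⟨⟨ha1, ha2⟩, hb1, hb2⟩
      exact ⟨⟨ha1, ha2.trans hcq⟩, hb1, hb2.trans hcq⟩
    · intro hw
      have hwS : w ∈ S := (hmemS w).2 hw
      have h1 : critE crit a b w ≤ c := hkey w hwS
      have h2 : crit s(a, w) ≤ c := le_trans (le_sup_of_le_left le_sup_right) h1
      have h3 : crit s(b, w) ≤ c := le_trans le_sup_right h1
      exact ⟨⟨hw.1.1, h2⟩, hw.2.1, h3⟩
  · refine ⟨crit s(a, b), Or.inl rfl, hq, ?_⟩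
    ext w
    simp only [Set.mem_setOf_eq]
    constructor
    · rintro ⟨⟨ha1, ha2⟩, hb1, hb2⟩
      exact ⟨⟨ha1, ha2.trans hq⟩, hb1, hb2.trans hq⟩
    · intro hw
      exact absurd ⟨w, (hmemS w).2 hw⟩ hne
end
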